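/- Let H be a finite 𝔽_q-saturated subgroup of GL₂(L) such that: Ẑ ⊆ H; every M ∈ H has trace in 𝔽_q and determinant in 𝔽_q^×; and every upper-triangular and every lower-triangular matrix belonging to H is diagonal. Then either H = Ẑ, or H is isomorphic as a group to GL₂(𝔽_q), in which case |H| = q(q−1)²(q+1). (This is the algebraic core of Proposition 3.4/Theorem B(b): the stabilizer of the image vertex of an elliptic point is either 𝔽_{q²}^× or GL₂(𝔽_q).) -/

import Mathlib

open Matrix Polynomial


lemma aux_card_le {F : Type*} [Field F] {n : ℕ} (hn : 2 ≤ n) (S : Finset F)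
    (hS : ∀ x ∈ S, x ^ n = x) : S.card ≤ n := by
  classical
  set p : F[X] := X ^ n - X with hp
  have hpne : p ≠ 0 := by
    intro h
    have : p.coeff n = 1 := by
      simp [hp, Polynomial.coeff_X_pow, Polynomial.coeff_X] <;> omega
    rw [h] at this
    simp at this
  have hsub : S ⊆ p.roots.toFinset := by
    intro x hx
    rw [Multiset.mem_toFinset, Polynomial.mem_roots hpne]
    simp [hp, Polynomial.IsRoot, sub_eq_zero, hS x hx]
  calc S.card ≤ p.roots.toFinset.card := Finset.card_le_card hsub
    _ ≤ Multiset.card p.roots := Multiset.toFinset_card_le _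
    _ ≤ p.natDegree := Polynomial.card_roots' p
    _ ≤ n := by
        apply le_trans (Polynomial.natDegree_sub_le _ _)
        simp [Polynomial.natDegree_X_pow, Polynomial.natDegree_X]
        omega

lemma aux_fix_range {F L : Type*} [Field F] [Fintype F] [Field L] {n : ℕ}
    (hn : Fintype.card F = n) (f : F →+* L) {x : L} (hx : x ^ n = x) :
    ∃ s : F, f s = x := by
  classical
  by_contra hcon
  push_neg at hcon
  have h2 : 2 ≤ n := hn ▸ Fintype.one_lt_card
  have hxm : x ∉ (Finset.univ : Finset F).image f := by
    simp only [Finset.mem_image]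
    rintro ⟨s, -, hs⟩
    exact hcon s hs
  have := aux_card_le h2 (insert x ((Finset.univ : Finset F).image f)) ?_
  · rw [Finset.card_insert_of_notMem hxm,
      Finset.card_image_of_injective _ f.injective, Finset.card_univ, hn] at this
    omega
  · intro y hy
    rcases Finset.mem_insert.mp hy with rfl | hy
    · exact hx
    · obtain ⟨s, _, rfl⟩ := Finset.mem_image.mp hy
      rw [← map_pow]
      congr 1
      rw [← hn]
      exact FiniteField.pow_card s

lemma aux_exists_nonfix {F : Type*} [Field F] [Fintype F] {n : ℕ}
    (hn : n < Fintype.card F) (hn2 : 2 ≤ n) : ∃ g : F, g ^ n ≠ g := by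
  by_contra hcon
  push_neg at hcon
  have := aux_card_le hn2 (Finset.univ : Finset F) (fun x _ => hcon x)
  rw [Finset.card_univ] at this
  omega

lemma aux_cyc {F : Type*} [Field F] [Fintype F] {a b : ℕ}
    (hab : a * b = Fintype.card F - 1) (ha : a ≠ 0) {y : F} (hy : y ≠ 0)
    (h1 : y ^ a = 1) : ∃ x : F, x ≠ 0 ∧ x ^ b = y := by
  classical
  obtain ⟨g, hg⟩ := IsCyclic.exists_generator (α := Fˣ)
  set u : Fˣ := Units.mk0 y hy with hu
  obtain ⟨k, hk0⟩ : u ∈ Submonoid.powers g := by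
    rw [mem_powers_iff_mem_zpowers]; exact hg u
  have hk : g ^ k = u := hk0
  have horder : orderOf g = Fintype.card F - 1 := by
    rw [orderOf_eq_card_of_forall_mem_zpowers hg, Nat.card_eq_fintype_card,
      Fintype.card_units]
  have hdvd : a * b ∣ k * a := by
    rw [hab, ← horder]
    apply orderOf_dvd_of_pow_eq_one
    have : u ^ a = 1 := by
      ext; push_cast; exact h1
    rw [← hk, ← pow_mul] at this
    exact this
  have hb : b ∣ k := by
    rcases Nat.eq_zero_or_pos a with rfl | hapos
    · omega
    · have : a * b ∣ a * k := by rwa [mul_comm k a] at hdvd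
      exact (mul_dvd_mul_iff_left (by omega : a ≠ 0)).mp this
  obtain ⟨m, rfl⟩ := hb
  refine ⟨(g ^ m : Fˣ), Units.ne_zero _, ?_⟩
  have : (g ^ m) ^ b = u := by rw [← hk, ← pow_mul, mul_comm b m]
  calc ((g ^ m : Fˣ) : F) ^ b = (((g ^ m) ^ b : Fˣ) : F) := by push_cast; ring
    _ = y := by rw [this, hu]; rfl

lemma aux_zeta {F : Type*} [Field F] [Fintype F] {a b : ℕ}
    (hab : a * b = Fintype.card F - 1) (ha : a ≠ 0) (hlt : a < Fintype.card F - 1) :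
    ∃ ζ : F, ζ ≠ 0 ∧ ζ ≠ 1 ∧ ζ ^ b = 1 := by
  classical
  obtain ⟨g, hg⟩ := IsCyclic.exists_generator (α := Fˣ)
  have horder : orderOf g = Fintype.card F - 1 := by
    rw [orderOf_eq_card_of_forall_mem_zpowers hg, Nat.card_eq_fintype_card,
      Fintype.card_units]
  refine ⟨((g ^ a : Fˣ) : F), Units.ne_zero _, ?_, ?_⟩
  · intro h
    have : (g ^ a : Fˣ) = 1 := by ext; push_cast at h ⊢; exact h
    have := orderOf_dvd_of_pow_eq_one this
    rw [horder] at this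
    have := Nat.le_of_dvd (by omega) this
    omega
  · have : (g ^ a) ^ b = 1 := by
      rw [← pow_mul, hab, ← horder, pow_orderOf_eq_one]
    calc ((g ^ a : Fˣ) : F) ^ b = (((g ^ a) ^ b : Fˣ) : F) := by push_cast; ring
      _ = 1 := by rw [this]; rfl


lemma aux_arith (m : ℕ) (hm : 2 ≤ m) :
    (m ^ 2 - 1) * (m ^ 2 - m) = m * (m - 1) ^ 2 * (m + 1) := by
  obtain ⟨k, rfl⟩ : ∃ k, m = k + 2 := ⟨m - 2, by omega⟩
  have hsq : (k + 2) ^ 2 = k * k + 4 * k + 4 := by ring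
  have h1 : (k + 2) ^ 2 - 1 = k * k + 4 * k + 3 := by omega
  have h2 : (k + 2) ^ 2 - (k + 2) = k * k + 3 * k + 2 := by omega
  have h3 : (k + 2) - 1 = k + 1 := by omega
  rw [h1, h2, h3]
  ring

lemma aux_lin1 {F : Type*} [Field F] (u w g gq μ : F) (hμ : μ ≠ 0) (hgg : gq - g ≠ 0) :
    (u * gq - w) / (gq - g) + μ * ((u - (u * gq - w) / (gq - g)) / μ) = u := by
  field_simp
  ring

lemma aux_lin2 {F : Type*} [Field F] (u w g gq μ : F) (hμ : μ ≠ 0) (hgg : gq - g ≠ 0) :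
    (u * gq - w) / (gq - g) * g + μ * ((u - (u * gq - w) / (gq - g)) / μ) * gq = w := by
  field_simp
  ring

open Matrix Polynomial

set_option maxHeartbeats 1000000 in
/-- **Algebraic core of Proposition 3.4 / Theorem B(b).** Let `H` be a finite
`𝔽_q`-saturated subgroup of `GL₂(L)` containing `Ẑ = {diag(α, α^q) : α ∈ 𝔽_{q²}^×}`,
all of whose elements have trace in `𝔽_q` and determinant in `𝔽_q^×`, and whose
triangular elements are all diagonal. Then either `H = Ẑ`, or `H ≅ GL₂(𝔽_q)`, in which
case `|H| = q(q−1)²(q+1)`. -/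
theorem stmt_16 (Fq Fq2 : Type*) [Field Fq] [Field Fq2] [Fintype Fq] [Fintype Fq2]
    (q : ℕ) (hq : Fintype.card Fq = q) (hq2 : Fintype.card Fq2 = q ^ 2)
    [Algebra Fq Fq2]
    (L : Type*) [Field L] [Algebra Fq2 L] [Algebra Fq L] [IsScalarTower Fq Fq2 L]
    (H : Subgroup (GL (Fin 2) L)) [Finite H]
    -- `H` is `𝔽_q`-saturated
    (hsat : ∀ M₁ M₂ : GL (Fin 2) L, M₁ ∈ H → M₂ ∈ H → ∀ α₁ α₂ : Fq,
      (algebraMap Fq L α₁ • (↑M₁ : Matrix (Fin 2) (Fin 2) L) +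
        algebraMap Fq L α₂ • (↑M₂ : Matrix (Fin 2) (Fin 2) L)).det ∈
        Set.range (fun β : Fqˣ => algebraMap Fq L (β : Fq)) →
      ∃ P ∈ H, (↑P : Matrix (Fin 2) (Fin 2) L) =
        algebraMap Fq L α₁ • (↑M₁ : Matrix (Fin 2) (Fin 2) L) +
          algebraMap Fq L α₂ • (↑M₂ : Matrix (Fin 2) (Fin 2) L))
    -- `Ẑ ⊆ H`
    (hZ : ∀ α : Fq2, α ≠ 0 → ∀ M : GL (Fin 2) L,
      (↑M : Matrix (Fin 2) (Fin 2) L) =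
        Matrix.diagonal ![algebraMap Fq2 L α, algebraMap Fq2 L (α ^ q)] → M ∈ H)
    -- traces lie in `𝔽_q` and determinants lie in `𝔽_q^×`
    (htr : ∀ M ∈ H, ∃ α : Fq, algebraMap Fq L α = (↑M : Matrix (Fin 2) (Fin 2) L).trace)
    (hdet : ∀ M ∈ H, ∃ β : Fqˣ,
      algebraMap Fq L (β : Fq) = (↑M : Matrix (Fin 2) (Fin 2) L).det)
    -- every upper- or lower-triangular matrix in `H` is diagonal
    (htri : ∀ M ∈ H,
      ((↑M : Matrix (Fin 2) (Fin 2) L) 1 0 = 0 →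
        (↑M : Matrix (Fin 2) (Fin 2) L) 0 1 = 0) ∧
      ((↑M : Matrix (Fin 2) (Fin 2) L) 0 1 = 0 →
        (↑M : Matrix (Fin 2) (Fin 2) L) 1 0 = 0)) :
    -- either `H = Ẑ` ...
    (∀ M ∈ H, ∃ α : Fq2, α ≠ 0 ∧ (↑M : Matrix (Fin 2) (Fin 2) L) =
      Matrix.diagonal ![algebraMap Fq2 L α, algebraMap Fq2 L (α ^ q)]) ∨
    -- ... or `H ≅ GL₂(𝔽_q)`, in which case `|H| = q(q−1)²(q+1)`
    (Nonempty (H ≃* GL (Fin 2) Fq) ∧ Nat.card H = q * (q - 1) ^ 2 * (q + 1)) := by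

  classical
  haveI : FiniteDimensional Fq Fq2 := Module.Finite.of_finite
  set ψ := algebraMap Fq L with hψdef
  set φ := algebraMap Fq2 L with hφdef
  have hq2' : 2 ≤ q := hq ▸ Fintype.one_lt_card
  have hq0 : q ≠ 0 := by omega
  have hφinj : Function.Injective φ := φ.injective
  have hltq2 : q < q ^ 2 := by nlinarith
  -- characteristic facts
  haveI : CharP Fq (ringChar Fq) := ringChar.charP Fq
  obtain ⟨np, hpp, hcard⟩ := FiniteField.card Fq (ringChar Fq)
  haveI : Fact (ringChar Fq).Prime := ⟨hpp⟩
  haveI : CharP L (ringChar Fq) :=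
    charP_of_injective_algebraMap (algebraMap Fq L).injective (ringChar Fq)
  haveI : CharP Fq2 (ringChar Fq) :=
    charP_of_injective_algebraMap (algebraMap Fq Fq2).injective (ringChar Fq)
  have hqp : q = (ringChar Fq) ^ (np : ℕ) := by rw [← hq, hcard]
  have haddL : ∀ x y : L, (x + y) ^ q = x ^ q + y ^ q := by
    intro x y; rw [hqp]; exact add_pow_char_pow ..
  have haddF : ∀ x y : Fq2, (x + y) ^ q = x ^ q + y ^ q := by
    intro x y; rw [hqp]; exact add_pow_char_pow ..
  have hnegF : ∀ x : Fq2, (-x) ^ q = -(x ^ q) := by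
    intro x
    have h := haddF x (-x)
    rw [add_neg_cancel, zero_pow hq0] at h
    exact eq_neg_of_add_eq_zero_right h.symm
  have hsubF : ∀ x y : Fq2, (x - y) ^ q = x ^ q - y ^ q := by
    intro x y
    rw [sub_eq_add_neg, sub_eq_add_neg, haddF, hnegF]
  -- fixed points of Frobenius
  have hfixψ : ∀ s : Fq, (ψ s) ^ q = ψ s := by
    intro s; rw [← map_pow]; congr 1; rw [← hq]; exact FiniteField.pow_card s
  have hfixF2 : ∀ t : Fq2, t ^ q ^ 2 = t := by
    intro t; rw [← hq2]; exact FiniteField.pow_card t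
  have hfixφq : ∀ t : Fq2, ((φ t) ^ q) ^ q = φ t := by
    intro t; rw [← pow_mul, ← pow_two, ← map_pow, hfixF2]
  have hfixFq : ∀ t : Fq2, (t ^ q) ^ q = t := by
    intro t; rw [← pow_mul, ← pow_two, hfixF2]
  have hNr : ∀ t : Fq2, (t * t ^ q) ^ q = t * t ^ q := by
    intro t; rw [mul_pow, hfixFq, mul_comm]
  have htoFq : ∀ x : L, x ^ q = x → ∃ s : Fq, ψ s = x := fun x hx => aux_fix_range hq ψ hx
  have htoFq2 : ∀ x : L, x ^ q ^ 2 = x → ∃ t : Fq2, φ t = x :=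
    fun x hx => aux_fix_range hq2 φ hx
  have hrange : ∀ x : L, x ^ q = x → x ≠ 0 →
      x ∈ Set.range (fun β : Fqˣ => ψ (β : Fq)) := by
    intro x hx hx0
    obtain ⟨s, hs⟩ := htoFq x hx
    have hs0 : s ≠ 0 := by rintro rfl; rw [map_zero] at hs; exact hx0 hs.symm
    exact ⟨Units.mk0 s hs0, hs⟩
  have hab1 : (q - 1) * (q + 1) = Fintype.card Fq2 - 1 := by
    rw [hq2]
    obtain ⟨k, rfl⟩ : ∃ k, q = k + 2 := ⟨q - 2, by omega⟩
    have : (k + 2 - 1) * (k + 2 + 1) + 1 = (k + 2) ^ 2 := by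
      have h1 : k + 2 - 1 = k + 1 := by omega
      rw [h1]; ring
    omega
  have hab2 : (q + 1) * (q - 1) = Fintype.card Fq2 - 1 := by rw [mul_comm]; exact hab1
  -- determinants of elements of GL are nonzero
  have hdetne : ∀ M : GL (Fin 2) L, (↑M : Matrix (Fin 2) (Fin 2) L).det ≠ 0 := by
    intro M
    have h1 : IsUnit (↑M : Matrix (Fin 2) (Fin 2) L) := ⟨M, rfl⟩
    rw [Matrix.isUnit_iff_isUnit_det] at h1
    exact h1.ne_zero
  -- the diagonal elements of Ẑ
  have hD : ∀ t : Fq2, t ≠ 0 → ∃ D : GL (Fin 2) L, D ∈ H ∧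
      (↑D : Matrix (Fin 2) (Fin 2) L) = Matrix.diagonal ![φ t, φ (t ^ q)] := by
    intro t ht
    have hdet0 : (Matrix.diagonal ![φ t, φ (t ^ q)]).det ≠ 0 := by
      have h0 : φ t ≠ 0 := fun h => ht (hφinj (by rw [h, map_zero]))
      have h1 : φ (t ^ q) ≠ 0 := fun h =>
        ht (pow_eq_zero_iff hq0 |>.mp (hφinj (by rw [h, map_zero])))
      rw [Matrix.det_diagonal, Fin.prod_univ_two]
      simp only [Matrix.cons_val_zero, Matrix.cons_val_one, Matrix.head_cons]
      exact mul_ne_zero h0 h1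
    refine ⟨Matrix.GeneralLinearGroup.mkOfDetNeZero _ hdet0, ?_, rfl⟩
    exact hZ t ht _ rfl
  -- the key "Vandermonde" lemma
  obtain ⟨g, hg⟩ := aux_exists_nonfix (n := q) (hq2 ▸ hltq2) hq2'
  have hg0 : g ≠ 0 := fun h => hg (by rw [h, zero_pow hq0])
  have hgq : (φ g) ^ q ≠ φ g := fun h => hg (hφinj (by rw [map_pow]; exact h))
  have hgg : φ g - (φ g) ^ q ≠ 0 := sub_ne_zero.mpr (Ne.symm hgq)
  have key2 : ∀ u v : L, (∀ β : Fq2, β ≠ 0 → ∃ s : Fq, ψ s = u * φ β + v * (φ β) ^ q) →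
      u = v ^ q ∧ v = u ^ q := by
    intro u v hyp
    have hfix : ∀ β : Fq2, β ≠ 0 →
        u ^ q * (φ β) ^ q + v ^ q * φ β = u * φ β + v * (φ β) ^ q := by
      intro β hβ
      obtain ⟨s, hs⟩ := hyp β hβ
      have h1 : (u * φ β + v * (φ β) ^ q) ^ q = u * φ β + v * (φ β) ^ q := by
        rw [← hs]; exact hfixψ s
      rw [haddL, mul_pow, mul_pow, hfixφq] at h1
      exact h1
    have e1 := hfix 1 one_ne_zero
    simp only [_root_.map_one, one_pow, mul_one] at e1
    have e2 := hfix g hg0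
    have k1 : (v ^ q - u) * (φ g - (φ g) ^ q) = 0 := by linear_combination e2 - (φ g) ^ q * e1
    have k2 : (u ^ q - v) * (φ g - (φ g) ^ q) = 0 := by linear_combination φ g * e1 - e2
    constructor
    · exact (sub_eq_zero.mp ((mul_eq_zero.mp k1).resolve_right hgg)).symm
    · exact (sub_eq_zero.mp ((mul_eq_zero.mp k2).resolve_right hgg)).symm
  -- trace of A * D t * B
  have htrMDN : ∀ (A B : Matrix (Fin 2) (Fin 2) L) (t : Fq2),
      (A * Matrix.diagonal ![φ t, φ (t ^ q)] * B).trace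
        = (B 0 0 * A 0 0 + B 0 1 * A 1 0) * φ t
          + (B 1 0 * A 0 1 + B 1 1 * A 1 1) * (φ t) ^ q := by
    intro A B t
    simp [Matrix.trace_fin_two, Matrix.mul_apply, Fin.sum_univ_two, Matrix.diagonal_apply,
      map_pow]
    ring
  -- shape of elements of H
  have hshape : ∀ M : GL (Fin 2) L, M ∈ H →
      (↑M : Matrix (Fin 2) (Fin 2) L) 1 1 = ((↑M : Matrix (Fin 2) (Fin 2) L) 0 0) ^ q ∧
      ((↑M : Matrix (Fin 2) (Fin 2) L) 0 0) ^ q ^ 2 = (↑M : Matrix (Fin 2) (Fin 2) L) 0 0 := by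
    intro M hM
    have hcond : ∀ t : Fq2, t ≠ 0 → ∃ s : Fq, ψ s =
        (↑M : Matrix (Fin 2) (Fin 2) L) 0 0 * φ t
          + (↑M : Matrix (Fin 2) (Fin 2) L) 1 1 * (φ t) ^ q := by
      intro t ht
      obtain ⟨D, hDH, hDeq⟩ := hD t ht
      obtain ⟨s, hs⟩ := htr (M * D) (H.mul_mem hM hDH)
      refine ⟨s, ?_⟩
      rw [hs, Units.val_mul, hDeq]
      simp only [Matrix.trace_fin_two, Matrix.mul_diagonal, Matrix.cons_val_zero,
        Matrix.cons_val_one, Matrix.head_cons, map_pow]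
    have h2 := key2 _ _ hcond
    refine ⟨h2.2, ?_⟩
    rw [pow_two, pow_mul, ← h2.2, ← h2.1]
  -- the master relation
  have hmaster : ∀ M N : GL (Fin 2) L, M ∈ H → N ∈ H →
      (↑M : Matrix (Fin 2) (Fin 2) L) 0 1 * (↑N : Matrix (Fin 2) (Fin 2) L) 1 0
        = ((↑M : Matrix (Fin 2) (Fin 2) L) 1 0 * (↑N : Matrix (Fin 2) (Fin 2) L) 0 1) ^ q := by
    intro M N hM hN
    have hcond : ∀ t : Fq2, t ≠ 0 → ∃ s : Fq, ψ s =
        ((↑N : Matrix (Fin 2) (Fin 2) L) 0 0 * (↑M : Matrix (Fin 2) (Fin 2) L) 0 0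
          + (↑N : Matrix (Fin 2) (Fin 2) L) 0 1 * (↑M : Matrix (Fin 2) (Fin 2) L) 1 0) * φ t
        + ((↑N : Matrix (Fin 2) (Fin 2) L) 1 0 * (↑M : Matrix (Fin 2) (Fin 2) L) 0 1
          + (↑N : Matrix (Fin 2) (Fin 2) L) 1 1 * (↑M : Matrix (Fin 2) (Fin 2) L) 1 1)
            * (φ t) ^ q := by
      intro t ht
      obtain ⟨D, hDH, hDeq⟩ := hD t ht
      obtain ⟨s, hs⟩ := htr (M * D * N) (H.mul_mem (H.mul_mem hM hDH) hN)
      refine ⟨s, ?_⟩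
      rw [hs, Units.val_mul, Units.val_mul, hDeq, htrMDN]
    have h2 := (key2 _ _ hcond).2
    rw [haddL, mul_pow, mul_pow, (hshape M hM).1, (hshape N hN).1] at h2
    rw [mul_pow]
    linear_combination h2
  by_cases hdiag : ∀ M ∈ H, (↑M : Matrix (Fin 2) (Fin 2) L) 0 1 = 0
  · -- all elements are diagonal : H = Ẑ
    left
    intro M hM
    obtain ⟨hA11, hA00⟩ := hshape M hM
    obtain ⟨t, hts⟩ := htoFq2 _ hA00
    have hb : (↑M : Matrix (Fin 2) (Fin 2) L) 0 1 = 0 := hdiag M hM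
    have hc : (↑M : Matrix (Fin 2) (Fin 2) L) 1 0 = 0 := (htri M hM).2 hb
    have htne : t ≠ 0 := by
      rintro rfl
      rw [map_zero] at hts
      apply hdetne M
      rw [Matrix.det_fin_two, hb, hc, hA11, ← hts]
      ring
    refine ⟨t, htne, ?_⟩
    ext i j
    fin_cases i <;> fin_cases j <;>
      simp [Matrix.diagonal_apply, hb, hc, hA11, ← hts, map_pow]
  · -- H contains a non-diagonal element
    right
    push_neg at hdiag
    obtain ⟨M₀, hM₀H, hb₀⟩ := hdiag
    have hc₀ : (↑M₀ : Matrix (Fin 2) (Fin 2) L) 1 0 ≠ 0 := fun h => hb₀ ((htri M₀ hM₀H).1 h)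
    set b₀ := (↑M₀ : Matrix (Fin 2) (Fin 2) L) 0 1 with hb₀def
    set c₀ := (↑M₀ : Matrix (Fin 2) (Fin 2) L) 1 0 with hc₀def
    have hnfix : (b₀ * c₀) ^ q = b₀ * c₀ := by
      have e := hmaster M₀ M₀ hM₀H hM₀H
      rw [mul_comm c₀ b₀] at e
      exact e.symm
    have hn0 : b₀ * c₀ ≠ 0 := mul_ne_zero hb₀ hc₀
    obtain ⟨nn, hnn⟩ := htoFq2 (b₀ * c₀) (by rw [pow_two, pow_mul', hnfix, hnfix])
    have hnnq : nn ^ q = nn := hφinj (by rw [map_pow, hnn, hnfix])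
    have hnn0 : nn ≠ 0 := by rintro rfl; rw [map_zero] at hnn; exact hn0 hnn.symm
    have hφnn0 : φ nn ≠ 0 := by rw [hnn]; exact hn0
    have hφnnq : (φ nn) ^ q = φ nn := by rw [← map_pow, hnnq]
    obtain ⟨a₀, ha₀⟩ := htoFq2 _ (hshape M₀ hM₀H).2
    -- the model parametrization
    set κ : Fq2 × Fq2 → Matrix (Fin 2) (Fin 2) L := fun p =>
      !![φ p.1, b₀ * φ p.2; φ nn / b₀ * φ (p.2 ^ q), φ (p.1 ^ q)] with hκdef
    set pmul : Fq2 × Fq2 → Fq2 × Fq2 → Fq2 × Fq2 := fun p p' =>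
      (p.1 * p'.1 + nn * (p.2 * p'.2 ^ q), p.1 * p'.2 + p.2 * p'.1 ^ q) with hpmuldef
    have hκinj : Function.Injective κ := by
      intro p p' h
      have h00 : κ p 0 0 = κ p' 0 0 := by rw [h]
      have h01 : κ p 0 1 = κ p' 0 1 := by rw [h]
      simp only [hκdef, Matrix.cons_val', Matrix.cons_val_zero, Matrix.cons_val_one,
        Matrix.head_cons, Matrix.empty_val', Matrix.cons_val_fin_one, Matrix.head_fin_const,
        Matrix.of_apply, Fin.zero_eta, Fin.mk_one] at h00 h01
      exact Prod.ext (hφinj h00) (hφinj (mul_left_cancel₀ hb₀ h01))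
    have hκmul : ∀ p p' : Fq2 × Fq2, κ p * κ p' = κ (pmul p p') := by
      intro p p'
      ext i j
      fin_cases i <;> fin_cases j <;>
        · simp only [hκdef, hpmuldef, Matrix.mul_apply, Fin.sum_univ_two, Matrix.cons_val',
            Matrix.cons_val_zero, Matrix.cons_val_one, Matrix.head_cons, Matrix.empty_val',
            Matrix.cons_val_fin_one, Matrix.head_fin_const, Matrix.of_apply,
            _root_.map_add, _root_.map_mul, map_pow, haddL, mul_pow, hfixφq, hφnnq, Fin.zero_eta, Fin.mk_one]
          try field_simp
          try ring
    have hκdet : ∀ a1 b1 : Fq2, (κ (a1, b1)).det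
        = φ (a1 * a1 ^ q - nn * (b1 * b1 ^ q)) := by
      intro a1 b1
      simp only [hκdef, Matrix.det_fin_two_of, map_sub, _root_.map_mul, map_pow]
      field_simp
    have hκadd : ∀ p p' : Fq2 × Fq2, κ p + κ p' = κ (p.1 + p'.1, p.2 + p'.2) := by
      intro p p'
      ext i j
      fin_cases i <;> fin_cases j <;>
        · simp only [hκdef, Matrix.add_apply, Matrix.cons_val', Matrix.cons_val_zero,
            Matrix.cons_val_one, Matrix.head_cons, Matrix.empty_val', Matrix.cons_val_fin_one,
            Matrix.head_fin_const, Matrix.of_apply, _root_.map_add, _root_.map_mul, map_pow,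
            haddL, mul_pow, Fin.zero_eta, Fin.mk_one]
          try ring
    have hκD : ∀ t : Fq2, Matrix.diagonal ![φ t, φ (t ^ q)] = κ (t, 0) := by
      intro t
      ext i j
      fin_cases i <;> fin_cases j <;>
        simp [hκdef, Matrix.diagonal_apply, zero_pow hq0, Fin.zero_eta, Fin.mk_one]
    -- every element of H is of the form κ p
    have hmemκ : ∀ M : GL (Fin 2) L, M ∈ H →
        ∃ p : Fq2 × Fq2, (↑M : Matrix (Fin 2) (Fin 2) L) = κ p := by
      intro M hM
      obtain ⟨hA11, hA00⟩ := hshape M hM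
      obtain ⟨a, ha⟩ := htoFq2 _ hA00
      have h1 : b₀ * (↑M : Matrix (Fin 2) (Fin 2) L) 1 0
          = (c₀ * (↑M : Matrix (Fin 2) (Fin 2) L) 0 1) ^ q := hmaster M₀ M hM₀H hM
      have h2 : (↑M : Matrix (Fin 2) (Fin 2) L) 0 1 * c₀
          = ((↑M : Matrix (Fin 2) (Fin 2) L) 1 0 * b₀) ^ q := hmaster M M₀ hM hM₀H
      set x := (↑M : Matrix (Fin 2) (Fin 2) L) 0 1 / b₀ with hxdef
      have hbx : (↑M : Matrix (Fin 2) (Fin 2) L) 0 1 = b₀ * x := by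
        rw [hxdef]; field_simp
      have hcx : (↑M : Matrix (Fin 2) (Fin 2) L) 1 0 * b₀ = φ nn * x ^ q := by
        have hcq : (c₀ * (↑M : Matrix (Fin 2) (Fin 2) L) 0 1) ^ q = φ nn * x ^ q := by
          rw [hbx, show c₀ * (b₀ * x) = b₀ * c₀ * x by ring, mul_pow, hnfix, hnn]
        linear_combination h1 + hcq
      have hx2 : x ^ q ^ 2 = x := by
        have e1 : (↑M : Matrix (Fin 2) (Fin 2) L) 0 1 * c₀ = φ nn * x := by
          rw [hbx, hnn]; ring
        have e2 : ((↑M : Matrix (Fin 2) (Fin 2) L) 1 0 * b₀) ^ q = φ nn * x ^ q ^ 2 := by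
          rw [hcx, mul_pow, hφnnq, ← pow_mul, ← pow_two]
        have e3 := e1.symm.trans (h2.trans e2)
        exact (mul_left_cancel₀ hφnn0 e3).symm
      obtain ⟨β, hβ⟩ := htoFq2 x hx2
      refine ⟨(a, β), ?_⟩
      ext i j
      fin_cases i <;> fin_cases j <;>
        simp only [hκdef, Matrix.cons_val', Matrix.cons_val_zero, Matrix.cons_val_one,
          Matrix.head_cons, Matrix.empty_val', Matrix.cons_val_fin_one, Matrix.head_fin_const,
          Matrix.of_apply, Fin.zero_eta, Fin.mk_one]
      · exact ha.symm
      · rw [hβ]; exact hbx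
      · rw [map_pow, hβ, div_mul_eq_mul_div, ← hcx, mul_div_assoc, div_self hb₀, mul_one]
      · rw [hA11, map_pow, ha]
    have hdetp : ∀ (M : GL (Fin 2) L), M ∈ H → ∀ p : Fq2 × Fq2,
        (↑M : Matrix (Fin 2) (Fin 2) L) = κ p →
          p.1 * p.1 ^ q ≠ nn * (p.2 * p.2 ^ q) := by
      intro M hM p hMp
      intro hcon
      obtain ⟨pa, pb⟩ := p
      apply hdetne M
      rw [hMp, hκdet pa pb]
      rw [show pa * pa ^ q - nn * (pb * pb ^ q) = 0 from by rw [hcon]; ring, map_zero]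
    have hM₀κ : (↑M₀ : Matrix (Fin 2) (Fin 2) L) = κ (a₀, 1) := by
      have hs0 := (hshape M₀ hM₀H).1
      ext i j
      fin_cases i <;> fin_cases j <;>
        simp only [hκdef, Matrix.cons_val', Matrix.cons_val_zero, Matrix.cons_val_one,
          Matrix.head_cons, Matrix.empty_val', Matrix.cons_val_fin_one, Matrix.head_fin_const,
          Matrix.of_apply, Fin.zero_eta, Fin.mk_one, _root_.map_one, one_pow, mul_one]
      · exact ha₀.symm
      · rfl
      · rw [hnn, mul_div_cancel_left₀ _ hb₀, hc₀def]
      · rw [map_pow, ha₀]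
        exact hs0
    have ha₀det : a₀ * a₀ ^ q ≠ nn := by
      have := hdetp M₀ hM₀H (a₀, 1) hM₀κ
      simpa using this
    -- saturation : every invertible κ p comes from H
    have hfillA : ∀ a β : Fq2, a ≠ 0 → β ≠ 0 → a * a ^ q ≠ nn * (β * β ^ q) →
        ∃ M : GL (Fin 2) L, M ∈ H ∧ (↑M : Matrix (Fin 2) (Fin 2) L) = κ (a, β) := by
      intro a β ha hβ hcond
      have haq : a * a ^ q ≠ 0 := mul_ne_zero ha (pow_ne_zero _ ha)
      have hβq : β * β ^ q ≠ 0 := mul_ne_zero hβ (pow_ne_zero _ hβ)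
      set v : Fq2 := a * a ^ q / (β * β ^ q) with hvdef
      have hv0 : v ≠ 0 := div_ne_zero haq hβq
      have hvfix : v ^ q = v := by
        rw [hvdef, div_pow, hNr, hNr]
      have hv1 : v ^ (q - 1) = 1 := by
        have h2 : v ^ (q - 1) * v = 1 * v := by
          rw [one_mul, ← pow_succ]
          have hh : q - 1 + 1 = q := by omega
          rw [hh, hvfix]
        exact mul_right_cancel₀ hv0 h2
      obtain ⟨w₁, hw₁0, hw₁⟩ := aux_cyc hab1 (by omega) hv0 hv1
      have hw₁' : w₁ * w₁ ^ q = v := by rw [← hw₁, pow_succ, mul_comm]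
      obtain ⟨ζ, hζ0, hζ1, hζ⟩ := aux_zeta hab1 (by omega)
        (by rw [hq2]; have := hltq2; omega)
      have hζ' : ζ * ζ ^ q = 1 := by rw [← hζ, pow_succ, mul_comm]
      obtain ⟨w, hw0, hwv, hwa₀⟩ : ∃ w : Fq2, w ≠ 0 ∧ w * w ^ q = v ∧ w ≠ a₀ := by
        by_cases hcase : w₁ = a₀
        · refine ⟨w₁ * ζ, mul_ne_zero hw₁0 hζ0, ?_, ?_⟩
          · rw [mul_pow]
            calc w₁ * ζ * (w₁ ^ q * ζ ^ q) = w₁ * w₁ ^ q * (ζ * ζ ^ q) := by ring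
              _ = v := by rw [hζ', hw₁', mul_one]
          · intro hab
            rw [hcase] at hab
            have ha₀0 : a₀ ≠ 0 := hcase ▸ hw₁0
            exact hζ1 (mul_left_cancel₀ ha₀0 (hab.trans (mul_one a₀).symm))
        · exact ⟨w₁, hw₁0, hw₁', hcase⟩
      have hwv' : w * w ^ q ≠ nn := by
        rw [hwv, hvdef]
        intro hcon2
        rw [div_eq_iff hβq] at hcon2
        exact hcond hcon2
      -- saturation: produce the element corresponding to (w, 1)
      obtain ⟨Dγ, hDγH, hDγeq⟩ := hD (w - a₀) (sub_ne_zero.mpr hwa₀)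
      have hsum : ψ (1 : Fq) • (↑M₀ : Matrix (Fin 2) (Fin 2) L)
          + ψ (1 : Fq) • (↑Dγ : Matrix (Fin 2) (Fin 2) L) = κ (w, 1) := by
        rw [_root_.map_one, one_smul, one_smul, hM₀κ, hDγeq, hκD, hκadd]
        have hc1 : a₀ + (w - a₀) = w := by ring
        have hc2 : (1 : Fq2) + 0 = 1 := by ring
        exact congrArg κ (Prod.ext hc1 hc2)
      have hdetmem : (ψ (1 : Fq) • (↑M₀ : Matrix (Fin 2) (Fin 2) L)
          + ψ (1 : Fq) • (↑Dγ : Matrix (Fin 2) (Fin 2) L)).det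
          ∈ Set.range (fun β : Fqˣ => ψ (β : Fq)) := by
        rw [hsum, hκdet]
        apply hrange
        · rw [← map_pow]
          congr 1
          have hone : (1 : Fq2) * (1 : Fq2) ^ q = 1 := by rw [one_pow, mul_one]
          rw [hone, mul_one, hsubF, hNr, hnnq]
        · intro h0
          have hz := hφinj (h0.trans (map_zero φ).symm)
          apply hwv'
          have hone : nn * ((1 : Fq2) * (1 : Fq2) ^ q) = nn := by
            rw [one_pow, mul_one, mul_one]
          rw [hone] at hz
          exact sub_eq_zero.mp hz
      obtain ⟨N, hNH, hNeq⟩ := hsat M₀ Dγ hM₀H hDγH 1 1 hdetmem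
      have hNκ : (↑N : Matrix (Fin 2) (Fin 2) L) = κ (w, 1) := hNeq.trans hsum
      -- now rescale by diagonal elements to reach (a, β)
      have hd0 : β * w / a ≠ 0 := div_ne_zero (mul_ne_zero hβ hw0) ha
      have hdNr : (β * w / a) ^ (q + 1) = 1 := by
        rw [pow_succ, div_pow, mul_pow, div_mul_div_comm,
          div_eq_one_iff_eq (mul_ne_zero (pow_ne_zero _ ha) ha)]
        have hbw : β * β ^ q * (w * w ^ q) = a * a ^ q := by
          rw [hwv, hvdef]
          field_simp
        linear_combination hbw
      obtain ⟨δ, hδ0, hδ⟩ := aux_cyc hab2 (by omega) hd0 hdNr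
      have hδq : δ ^ q = δ * (β * w / a) := by
        have hh : q - 1 + 1 = q := by omega
        calc δ ^ q = δ ^ (q - 1 + 1) := by rw [hh]
          _ = δ ^ (q - 1) * δ := pow_succ δ (q - 1)
          _ = δ * (β * w / a) := by rw [hδ]; ring
      have hδq0 : δ ^ q ≠ 0 := pow_ne_zero _ hδ0
      set γ' : Fq2 := β / δ ^ q with hγ'def
      have hγ'0 : γ' ≠ 0 := div_ne_zero hβ hδq0
      obtain ⟨D1, hD1H, hD1eq⟩ := hD γ' hγ'0
      obtain ⟨D2, hD2H, hD2eq⟩ := hD δ hδ0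
      refine ⟨D1 * N * D2, H.mul_mem (H.mul_mem hD1H hNH) hD2H, ?_⟩
      rw [Units.val_mul, Units.val_mul, hD1eq, hNκ, hD2eq, hκD, hκD, hκmul, hκmul]
      have hm1 : pmul (γ', (0 : Fq2)) (w, (1 : Fq2)) = (γ' * w, γ') := by
        show (γ' * w + nn * (0 * 1 ^ q), γ' * 1 + 0 * w ^ q) = (γ' * w, γ')
        exact Prod.ext (by ring) (by ring)
      have hm2 : pmul (γ' * w, γ') (δ, (0 : Fq2)) = (γ' * w * δ, γ' * δ ^ q) := by
        show (γ' * w * δ + nn * (γ' * 0 ^ q), γ' * w * 0 + γ' * δ ^ q)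
          = (γ' * w * δ, γ' * δ ^ q)
        refine Prod.ext ?_ ?_
        · rw [zero_pow hq0]; ring
        · ring
      rw [hm1, hm2]
      have hc1 : γ' * w * δ = a := by
        rw [hγ'def, hδq]
        field_simp
      have hc2 : γ' * δ ^ q = β := by
        rw [hγ'def, div_mul_cancel₀ _ hδq0]
      exact congrArg κ (Prod.ext hc1 hc2)
    have hfill : ∀ p : Fq2 × Fq2, p.1 * p.1 ^ q ≠ nn * (p.2 * p.2 ^ q) →
        ∃ M : GL (Fin 2) L, M ∈ H ∧ (↑M : Matrix (Fin 2) (Fin 2) L) = κ p := by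
      rintro ⟨a, β⟩ hp
      by_cases hβ : β = 0
      · subst hβ
        have ha : a ≠ 0 := by
          rintro rfl
          apply hp
          show (0 : Fq2) * 0 ^ q = nn * (0 * 0 ^ q)
          rw [zero_pow hq0]
          ring
        obtain ⟨D, hDH, hDeq⟩ := hD a ha
        exact ⟨D, hDH, by rw [hDeq, hκD]⟩
      · by_cases ha : a = 0
        · subst ha
          have hβq : β * β ^ q ≠ 0 := mul_ne_zero hβ (pow_ne_zero _ hβ)
          by_cases ha₀ : a₀ = 0
          · obtain ⟨Dβ, hDβH, hDβeq⟩ := hD β hβ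
            refine ⟨Dβ * M₀, H.mul_mem hDβH hM₀H, ?_⟩
            rw [Units.val_mul, hDβeq, hκD, hM₀κ, ha₀, hκmul]
            have hm : pmul (β, (0 : Fq2)) ((0 : Fq2), (1 : Fq2)) = ((0 : Fq2), β) := by
              show (β * 0 + nn * (0 * 1 ^ q), β * 1 + 0 * 0 ^ q) = ((0 : Fq2), β)
              exact Prod.ext (by ring) (by ring)
            rw [hm]
          · have hd₀ : a₀ * a₀ ^ q - nn ≠ 0 := sub_ne_zero.mpr ha₀det
            have ha₀q : (a₀ : Fq2) ^ q ≠ 0 := pow_ne_zero _ ha₀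
            set ε : Fq2 := β * a₀ ^ q / (a₀ * a₀ ^ q - nn) with hεdef
            have hε0 : ε ≠ 0 := div_ne_zero (mul_ne_zero hβ ha₀q) hd₀
            set e : Fq2 := -(nn * ε ^ q) / a₀ with hedef
            have he0 : e ≠ 0 := by
              rw [hedef]
              apply div_ne_zero _ ha₀
              rw [neg_ne_zero]
              exact mul_ne_zero hnn0 (pow_ne_zero _ hε0)
            have hkey : pmul (a₀, (1 : Fq2)) (e, ε) = ((0 : Fq2), β) := by
              have h1 : a₀ * e + nn * (1 * ε ^ q) = 0 := by
                rw [hedef]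
                field_simp
                ring
              have h2 : a₀ * ε + 1 * e ^ q = β := by
                have heq : e ^ q = -(nn * ε) / a₀ ^ q := by
                  rw [hedef, div_pow, hnegF, mul_pow, hnnq, hfixFq]
                rw [heq, hεdef, one_mul]
                field_simp
                ring
              exact Prod.ext h1 h2
            have hedet : e * e ^ q ≠ nn * (ε * ε ^ q) := by
              intro hcon2
              have hmm := hκmul (a₀, (1 : Fq2)) (e, ε)
              rw [hkey] at hmm
              have hdd := congrArg Matrix.det hmm
              rw [Matrix.det_mul, hκdet, hκdet, hκdet] at hdd
              rw [show e * e ^ q - nn * (ε * ε ^ q) = 0 from by rw [hcon2]; ring,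
                map_zero, mul_zero] at hdd
              have hz := hφinj (hdd.symm.trans (map_zero φ).symm)
              rw [zero_mul, zero_sub, neg_eq_zero] at hz
              exact (mul_ne_zero hnn0 hβq) hz
            obtain ⟨N, hNH, hNeq⟩ := hfillA e ε he0 hε0 hedet
            refine ⟨M₀ * N, H.mul_mem hM₀H hNH, ?_⟩
            rw [Units.val_mul, hM₀κ, hNeq, hκmul, hkey]
        · exact hfillA a β ha hβ hp
    -- the endomorphism-algebra model
    obtain ⟨μ, hμ0, hμ⟩ : ∃ μ : Fq2, μ ≠ 0 ∧ μ * μ ^ q = nn := by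
      have h1 : nn ^ (q - 1) = 1 := by
        have h := hnnq
        have h2 : nn ^ (q - 1) * nn = 1 * nn := by
          rw [one_mul, ← pow_succ]
          have : q - 1 + 1 = q := by omega
          rw [this, hnnq]
        exact mul_right_cancel₀ hnn0 h2
      obtain ⟨x, hx0, hx⟩ := aux_cyc hab1 (by omega) hnn0 h1
      exact ⟨x, hx0, by rw [← hx, pow_succ, mul_comm]⟩
    have halgfix : ∀ s : Fq, (algebraMap Fq Fq2 s) ^ q = algebraMap Fq Fq2 s := by
      intro s; rw [← map_pow]; congr 1; rw [← hq]; exact FiniteField.pow_card s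
    set τ : Fq2 × Fq2 → Module.End Fq Fq2 := fun p =>
      { toFun := fun x => p.1 * x + μ * p.2 * x ^ q
        map_add' := by
          intro x y
          show p.1 * (x + y) + μ * p.2 * (x + y) ^ q
              = (p.1 * x + μ * p.2 * x ^ q) + (p.1 * y + μ * p.2 * y ^ q)
          rw [haddF]; ring
        map_smul' := by
          intro s x
          show p.1 * (s • x) + μ * p.2 * (s • x) ^ q
              = s • (p.1 * x + μ * p.2 * x ^ q)
          simp only [Algebra.smul_def]
          rw [mul_pow, halgfix]
          ring } with hτdef
    have hτapp : ∀ p : Fq2 × Fq2, ∀ x : Fq2, τ p x = p.1 * x + μ * p.2 * x ^ q := by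
      intro p x; rfl
    have hτmul : ∀ p p' : Fq2 × Fq2, τ (pmul p p') = τ p * τ p' := by
      intro p p'
      apply LinearMap.ext
      intro x
      rw [Module.End.mul_apply, hτapp, hτapp, hτapp, hpmuldef]
      simp only []
      rw [haddF (p'.1 * x) (μ * p'.2 * x ^ q), mul_pow, mul_pow, mul_pow, hfixFq]
      linear_combination (-(p.2 * p'.2 ^ q * x)) * hμ
    have hτinj : Function.Injective τ := by
      intro p p' h
      have h1 := LinearMap.congr_fun h 1
      have h2 := LinearMap.congr_fun h g
      rw [hτapp, hτapp] at h1 h2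
      simp only [one_pow, mul_one] at h1
      have hβ : p.2 = p'.2 := by
        have k : μ * (p.2 - p'.2) * (g ^ q - g) = 0 := by linear_combination h2 - g * h1
        have hggF : g ^ q - g ≠ 0 := sub_ne_zero.mpr hg
        have k2 := (mul_eq_zero.mp k).resolve_right hggF
        have k3 := (mul_eq_zero.mp k2).resolve_left hμ0
        exact sub_eq_zero.mp k3
      have hα : p.1 = p'.1 := by
        rw [hβ] at h1
        exact add_right_cancel h1
      exact Prod.ext hα hβ
    have hfinrank : Module.finrank Fq Fq2 = 2 := by
      have hcard := Module.card_eq_pow_finrank (K := Fq) (V := Fq2)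
      rw [hq, hq2] at hcard
      exact (Nat.pow_right_injective hq2' hcard.symm)
    have hli : LinearIndependent Fq ![(1 : Fq2), g] := by
      rw [LinearIndependent.pair_iff]
      intro s t hst
      simp only [Algebra.smul_def, mul_one] at hst
      by_cases htz : t = 0
      · refine ⟨?_, htz⟩
        rw [htz, _root_.map_zero, zero_mul, add_zero] at hst
        exact (_root_.map_eq_zero _).mp hst
      · exfalso
        apply hg
        have htz' : algebraMap Fq Fq2 t ≠ 0 := fun h => htz ((_root_.map_eq_zero _).mp h)
        have hgval : g = -(algebraMap Fq Fq2 s / algebraMap Fq Fq2 t) := by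
          field_simp
          linear_combination hst
        rw [hgval, hnegF, div_pow, halgfix, halgfix]
    have hcard2 : Fintype.card (Fin 2) = Module.finrank Fq Fq2 := by
      rw [Fintype.card_fin, hfinrank]
    set bs2 : Module.Basis (Fin 2) Fq Fq2 :=
      basisOfLinearIndependentOfCardEqFinrank hli hcard2 with hbs2def
    have hbs2 : ∀ i, bs2 i = ![(1 : Fq2), g] i := fun i => by
      rw [hbs2def, coe_basisOfLinearIndependentOfCardEqFinrank]
    have hτsurj : Function.Surjective τ := by
      intro f
      have hggF : g ^ q - g ≠ 0 := sub_ne_zero.mpr hg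
      refine ⟨((f 1 * g ^ q - f g) / (g ^ q - g),
        (f 1 - (f 1 * g ^ q - f g) / (g ^ q - g)) / μ), ?_⟩
      apply bs2.ext
      intro i
      rw [hτapp]
      fin_cases i <;>
        simp only [hbs2, Matrix.cons_val_zero, Matrix.cons_val_one, Matrix.head_cons,
          Fin.zero_eta, Fin.mk_one, one_pow, mul_one]
      · exact aux_lin1 (f 1) (f g) g (g ^ q) μ hμ0 hggF
      · exact aux_lin2 (f 1) (f g) g (g ^ q) μ hμ0 hggF
    have hτunit : ∀ p : Fq2 × Fq2, IsUnit (τ p) ↔ p.1 * p.1 ^ q ≠ nn * (p.2 * p.2 ^ q) := by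
      intro p
      constructor
      · intro hu hcon
        have hbij := (Module.End.isUnit_iff (τ p)).mp hu
        rcases eq_or_ne p.2 0 with hβ0 | hβ0
        · rw [hβ0, zero_pow hq0, mul_zero, mul_zero] at hcon
          have hp1 : p.1 = 0 := by
            rcases mul_eq_zero.mp hcon with h | h
            · exact h
            · exact (pow_eq_zero_iff hq0).mp h
          have hτ0 : τ p 1 = τ p 0 := by
            rw [hτapp, hτapp, hβ0, hp1]; simp
          exact one_ne_zero (hbij.injective hτ0)
        · have hp1 : p.1 ≠ 0 := by
            intro h0
            rw [h0, zero_mul] at hcon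
            rcases mul_eq_zero.mp hcon.symm with h | h
            · exact hnn0 h
            · rcases mul_eq_zero.mp h with h' | h'
              · exact hβ0 h'
              · exact hβ0 ((pow_eq_zero_iff hq0).mp h')
          set v : Fq2 := -(p.1 / (μ * p.2)) with hv
          have hv0 : v ≠ 0 := by
            rw [hv]
            simp only [ne_eq, neg_eq_zero, _root_.div_eq_zero_iff, not_or]
            exact ⟨hp1, mul_ne_zero hμ0 hβ0⟩
          have hden : μ * p.2 * (μ * p.2) ^ q = p.1 * p.1 ^ q := by
            rw [mul_pow, hcon]
            linear_combination (p.2 * p.2 ^ q) * hμ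
          have hb2 : μ * p.2 ≠ 0 := mul_ne_zero hμ0 hβ0
          have hvNr : v ^ (q + 1) = 1 := by
            rw [pow_succ, hv, hnegF, div_pow, neg_mul_neg, div_mul_div_comm,
              div_eq_one_iff_eq (mul_ne_zero (pow_ne_zero _ hb2) hb2)]
            linear_combination -hden
          obtain ⟨x, hx0, hxq⟩ := aux_cyc hab2 (by omega) hv0 hvNr
          have hxq' : x ^ q = v * x := by
            have hh : q - 1 + 1 = q := by omega
            calc x ^ q = x ^ (q - 1 + 1) := by rw [hh]
              _ = x ^ (q - 1) * x := pow_succ x (q - 1)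
              _ = v * x := by rw [hxq]
          have hker : τ p x = 0 := by
            rw [hτapp, hxq', hv]
            field_simp
            ring
          have hx00 := hbij.injective (a₁ := x) (a₂ := 0) (by rw [hker, map_zero])
          exact hx0 hx00
      · intro hne
        have hinj : Function.Injective (τ p) := by
          rw [injective_iff_map_eq_zero]
          intro x hx
          by_contra hx0
          rw [hτapp] at hx
          rcases eq_or_ne p.2 0 with hβ0 | hβ0
          · rw [hβ0, mul_zero, zero_mul, add_zero] at hx
            rcases mul_eq_zero.mp hx with h | h
            · rw [h, zero_mul] at hne
              rw [hβ0, zero_pow hq0, mul_zero, mul_zero] at hne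
              exact hne rfl
            · exact hx0 h
          · have e1 : μ * p.2 * x ^ q = -(p.1 * x) := by linear_combination hx
            have e2 : μ ^ q * p.2 ^ q * x = -(p.1 ^ q * x ^ q) := by
              have := congrArg (· ^ q) e1
              rw [mul_pow, mul_pow, hfixFq, hnegF, mul_pow] at this
              exact this
            have e3 : μ * p.2 * x ^ q * (μ ^ q * p.2 ^ q * x)
                = p.1 * x * (p.1 ^ q * x ^ q) := by
              rw [e1, e2]; ring
            have hxx : x * x ^ q ≠ 0 := mul_ne_zero hx0 (pow_ne_zero _ hx0)
            have e4 : nn * (p.2 * p.2 ^ q) = p.1 * p.1 ^ q := by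
              apply mul_right_cancel₀ hxx
              linear_combination e3 - (p.2 * p.2 ^ q * (x * x ^ q)) * hμ
            exact hne e4.symm
        exact (Module.End.isUnit_iff (τ p)).mpr
          ⟨hinj, LinearMap.injective_iff_surjective.mp hinj⟩
    -- assembling the isomorphism
    have hpair : ∀ M : H, ∃ p : Fq2 × Fq2,
        ((M : GL (Fin 2) L) : Matrix (Fin 2) (Fin 2) L) = κ p := fun M => hmemκ M M.2
    choose pr hpr using hpair
    have hunit : ∀ M : H, IsUnit (τ (pr M)) :=
      fun M => (hτunit _).mpr (hdetp _ M.2 _ (hpr M))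
    have hFmul : ∀ M N : H, (hunit (M * N)).unit = (hunit M).unit * (hunit N).unit := by
      intro M N
      apply Units.ext
      rw [Units.val_mul, IsUnit.unit_spec, IsUnit.unit_spec, IsUnit.unit_spec, ← hτmul]
      congr 1
      apply hκinj
      rw [← hκmul, ← hpr M, ← hpr N, ← Units.val_mul]
      have h5 := hpr (M * N)
      rw [Subgroup.coe_mul] at h5
      exact h5.symm
    set F : H →* (Module.End Fq Fq2)ˣ := MonoidHom.mk' (fun M => (hunit M).unit) hFmul
      with hFdef
    have hFinj : Function.Injective F := by
      intro M N h
      have h2 : τ (pr M) = τ (pr N) := by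
        have := congrArg Units.val h
        simpa [hFdef] using this
      have h3 : pr M = pr N := hτinj h2
      have h4 : ((M : GL (Fin 2) L) : Matrix (Fin 2) (Fin 2) L)
          = ((N : GL (Fin 2) L) : Matrix (Fin 2) (Fin 2) L) := by
        rw [hpr M, hpr N, h3]
      exact Subtype.ext (Units.ext h4)
    have hFsurj : Function.Surjective F := by
      intro u
      obtain ⟨p, hp⟩ := hτsurj (↑u : Module.End Fq Fq2)
      have hpu : IsUnit (τ p) := hp ▸ u.isUnit
      obtain ⟨M, hMH, hMp⟩ := hfill p ((hτunit p).mp hpu)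
      refine ⟨⟨M, hMH⟩, ?_⟩
      apply Units.ext
      have hpr2 : pr ⟨M, hMH⟩ = p := by
        apply hκinj
        rw [← hpr ⟨M, hMH⟩]
        exact hMp
      simp only [hFdef, MonoidHom.mk'_apply, IsUnit.unit_spec]
      rw [hpr2, hp]
    have e1 : H ≃* (Module.End Fq Fq2)ˣ := MulEquiv.ofBijective F ⟨hFinj, hFsurj⟩
    have e2 : (Module.End Fq Fq2)ˣ ≃* GL (Fin 2) Fq :=
      Units.mapEquiv (LinearMap.toMatrixAlgEquiv bs2).toMulEquiv
    refine ⟨⟨e1.trans e2⟩, ?_⟩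
    rw [Nat.card_congr (e1.trans e2).toEquiv]
    rw [Matrix.card_GL_field, hq, Fin.prod_univ_two]
    simp only [Fin.val_zero, Fin.val_one, pow_zero, pow_one]
    exact aux_arith q hq2'
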